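/- Let A, B be bounded linear operators on a complex Hilbert space H such that w(AB + BA) = 2√2 · ‖B‖ · w(A) (or w(AB − BA) = 2√2 · ‖B‖ · w(A)) with B ≠ 0 and A ≠ 0. Then ‖Re(A) + Im(A)‖ = ‖Re(A) − Im(A)‖. -/

import Mathlib

open ContinuousLinearMap Complex
open scoped InnerProductSpace

variable {H : Type*} [NormedAddCommGroup H] [InnerProductSpace ℂ H] [CompleteSpace H]

noncomputable def nrad (A : H →L[ℂ] H) : ℝ :=
  ⨆ x : {x : H // ‖x‖ = 1}, ‖(inner ℂ (A x) (x : H) : ℂ)‖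

noncomputable def reP (A : H →L[ℂ] H) : H →L[ℂ] H := (2 : ℂ)⁻¹ • (A + adjoint A)
noncomputable def imP (A : H →L[ℂ] H) : H →L[ℂ] H := (2 * Complex.I)⁻¹ • (A - adjoint A)

noncomputable def oabs (A : H →L[ℂ] H) : H →L[ℂ] H := cfc Real.sqrt (adjoint A * A)

noncomputable def opow (T : H →L[ℂ] H) (r : ℝ) : H →L[ℂ] H := cfc (fun t : ℝ => t ^ r) T

-- auxiliary lemmas

lemma nrad_bdd (A : H →L[ℂ] H) :
    BddAbove (Set.range fun x : {x : H // ‖x‖ = 1} => ‖(⟪A x, (x : H)⟫_ℂ)‖) := by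
  refine ⟨‖A‖, ?_⟩
  rintro r ⟨⟨x, hx⟩, rfl⟩
  calc ‖(⟪A x, x⟫_ℂ)‖ ≤ ‖A x‖ * ‖x‖ := norm_inner_le_norm _ _
    _ ≤ ‖A‖ * ‖x‖ * ‖x‖ := by gcongr; exact A.le_opNorm x
    _ = ‖A‖ := by rw [hx]; ring

lemma inner_le_nrad (A : H →L[ℂ] H) (x : H) (hx : ‖x‖ = 1) :
    ‖(⟪A x, x⟫_ℂ)‖ ≤ nrad A :=
  le_ciSup (nrad_bdd A) (⟨x, hx⟩ : {x : H // ‖x‖ = 1})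

lemma nrad_nonneg (A : H →L[ℂ] H) : 0 ≤ nrad A :=
  Real.iSup_nonneg fun _ => norm_nonneg _

lemma nrad_le [Nonempty {x : H // ‖x‖ = 1}] (A : H →L[ℂ] H) (c : ℝ)
    (h : ∀ x : H, ‖x‖ = 1 → ‖(⟪A x, x⟫_ℂ)‖ ≤ c) : nrad A ≤ c :=
  ciSup_le fun x => h x x.2

/-- a self-adjoint operator whose numerical values are bounded has bounded norm -/
lemma norm_le_of_sym (T : H →L[ℂ] H) (hT : adjoint T = T) (C : ℝ) (hC : 0 ≤ C)
    (h : ∀ x : H, ‖(⟪T x, x⟫_ℂ)‖ ≤ C * ‖x‖ ^ 2) : ‖T‖ ≤ C := by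
  refine T.opNorm_le_bound hC fun x => ?_
  rcases eq_or_ne (T x) 0 with h0 | h0
  · rw [h0, norm_zero]; positivity
  rcases eq_or_ne x 0 with rfl | hx0
  · simp at h0
  -- key polarization bound
  have key : ∀ u v : H, (⟪T u, v⟫_ℂ).re ≤ C * (‖u‖ ^ 2 + ‖v‖ ^ 2) / 2 := by
    intro u v
    have expand : ⟪T (u + v), u + v⟫_ℂ - ⟪T (u - v), u - v⟫_ℂ
        = 2 * (⟪T u, v⟫_ℂ + ⟪T v, u⟫_ℂ) := by
      simp only [map_add, map_sub, inner_add_left, inner_add_right, inner_sub_left,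
        inner_sub_right]
      ring
    have hsym : ⟪T v, u⟫_ℂ = starRingEnd ℂ ⟪T u, v⟫_ℂ := by
      rw [← inner_conj_symm, ← hT, adjoint_inner_right, hT]
    rw [hsym] at expand
    have h3 := congrArg Complex.re expand
    simp only [Complex.sub_re, Complex.mul_re, Complex.add_re, Complex.re_ofNat,
      Complex.im_ofNat, Complex.conj_re, Complex.conj_im, Complex.sub_im,
      Complex.add_im] at h3
    ring_nf at h3
    have h1 : |(⟪T (u + v), u + v⟫_ℂ).re| ≤ C * ‖u + v‖ ^ 2 :=
      le_trans (Complex.abs_re_le_norm _) (h _)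
    have h2 : |(⟪T (u - v), u - v⟫_ℂ).re| ≤ C * ‖u - v‖ ^ 2 :=
      le_trans (Complex.abs_re_le_norm _) (h _)
    have hpar : ‖u + v‖ * ‖u + v‖ + ‖u - v‖ * ‖u - v‖ = 2 * (‖u‖ * ‖u‖ + ‖v‖ * ‖v‖) :=
      by simpa only [sq] using parallelogram_law_with_norm ℂ u v
    have h1' := abs_le.mp h1
    have h2' := abs_le.mp h2
    nlinarith [h1'.1, h1'.2, h2'.1, h2'.2]
  -- apply with v the normalized T x
  set r : ℝ := ‖x‖ / ‖T x‖ with hr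
  have hTx : (0:ℝ) < ‖T x‖ := norm_pos_iff.mpr h0
  have hxpos : (0:ℝ) < ‖x‖ := norm_pos_iff.mpr hx0
  have hy : ‖(r : ℂ) • T x‖ = ‖x‖ := by
    rw [norm_smul]
    simp [hr, abs_of_pos (div_pos hxpos hTx), div_mul_cancel₀, hTx.ne']
  have hinner : (⟪T x, (r : ℂ) • T x⟫_ℂ).re = ‖x‖ * ‖T x‖ := by
    have hv : ⟪T x, (r : ℂ) • T x⟫_ℂ = ((r * ‖T x‖ ^ 2 : ℝ) : ℂ) := by
      rw [inner_smul_right, inner_self_eq_norm_sq_to_K]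
      rw [Complex.ofReal_mul, Complex.ofReal_pow]; rfl
    rw [hv, Complex.ofReal_re, hr]
    field_simp
  have hk := key x ((r : ℂ) • T x)
  rw [hinner, hy] at hk
  have hfin : ‖x‖ * ‖T x‖ ≤ C * ‖x‖ ^ 2 := by linarith
  calc ‖T x‖ = (‖x‖ * ‖T x‖) / ‖x‖ := by field_simp
    _ ≤ (C * ‖x‖ ^ 2) / ‖x‖ := by gcongr
    _ = C * ‖x‖ := by field_simp

lemma adjoint_reP (A : H →L[ℂ] H) : adjoint (reP A) = reP A := by
  have h2 : star ((2 : ℂ)⁻¹) = (2 : ℂ)⁻¹ := by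
    simp [Complex.star_def, map_inv₀]
  simp only [reP, ← star_eq_adjoint, star_smul, star_add, star_star, h2]
  rw [add_comm]

lemma adjoint_imP (A : H →L[ℂ] H) : adjoint (imP A) = imP A := by
  have h2 : star ((2 * Complex.I : ℂ)⁻¹) = -(2 * Complex.I)⁻¹ := by
    simp [Complex.star_def, map_inv₀, map_mul, Complex.conj_I]
  simp only [imP, ← star_eq_adjoint, star_smul, star_sub, star_star, h2]
  rw [neg_smul, ← smul_neg, neg_sub]

lemma A_decomp (A : H →L[ℂ] H) : reP A + Complex.I • imP A = A := by
  rw [reP, imP, smul_smul]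
  have h1 : Complex.I * (2 * Complex.I)⁻¹ = (2 : ℂ)⁻¹ := by
    field_simp
  rw [h1]
  module

lemma Astar_decomp (A : H →L[ℂ] H) : reP A - Complex.I • imP A = adjoint A := by
  rw [reP, imP, smul_smul]
  have h1 : Complex.I * (2 * Complex.I)⁻¹ = (2 : ℂ)⁻¹ := by
    field_simp
  rw [h1]
  module

lemma norms_sq_eq (A : H →L[ℂ] H) (x : H) :
    ‖A x‖ ^ 2 + ‖adjoint A x‖ ^ 2
      = ‖(reP A + imP A) x‖ ^ 2 + ‖(reP A - imP A) x‖ ^ 2 := by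
  set u := reP A x
  set v := imP A x
  have hAx : A x = u + Complex.I • v := by
    conv_lhs => rw [← A_decomp A]
    simp [u, v]
  have hAsx : adjoint A x = u - Complex.I • v := by
    conv_lhs => rw [← Astar_decomp A]
    simp [u, v]
  have hPx : (reP A + imP A) x = u + v := by simp [u, v]
  have hQx : (reP A - imP A) x = u - v := by simp [u, v]
  rw [hAx, hAsx, hPx, hQx]
  have law1 := parallelogram_law_with_norm ℂ u (Complex.I • v)
  have law2 := parallelogram_law_with_norm ℂ u v
  have hIv : ‖Complex.I • v‖ = ‖v‖ := by
    rw [norm_smul]; simp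
  rw [hIv] at law1
  simp only [sq]
  linarith

lemma inner_le_nrad' (A : H →L[ℂ] H) (x : H) :
    ‖(⟪A x, x⟫_ℂ)‖ ≤ nrad A * ‖x‖ ^ 2 := by
  rcases eq_or_ne x 0 with rfl | hx0
  · simp
  have hx : (0:ℝ) < ‖x‖ := norm_pos_iff.mpr hx0
  set y : H := (‖x‖⁻¹ : ℂ) • x with hy
  have hy1 : ‖y‖ = 1 := by
    rw [hy, norm_smul]
    simp [abs_of_pos hx, inv_mul_cancel₀ hx.ne']
  have hinner : (⟪A y, y⟫_ℂ) = ((‖x‖⁻¹ ^ 2 : ℝ) : ℂ) * ⟪A x, x⟫_ℂ := by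
    rw [hy]
    simp only [map_smul, inner_smul_left, inner_smul_right, map_inv₀, Complex.conj_ofReal]
    push_cast
    ring
  have := inner_le_nrad A y hy1
  rw [hinner] at this
  rw [norm_mul] at this
  have hns : ‖((‖x‖⁻¹ ^ 2 : ℝ) : ℂ)‖ = ‖x‖⁻¹ ^ 2 := by
    rw [Complex.norm_real]
    simp [abs_of_pos (by positivity : (0:ℝ) < ‖x‖⁻¹ ^ 2)]
  rw [hns] at this
  have h' : ‖(⟪A x, x⟫_ℂ)‖ = ‖x‖ ^ 2 * (‖x‖⁻¹ ^ 2 * ‖(⟪A x, x⟫_ℂ)‖) := by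
    field_simp
  rw [h']
  calc ‖x‖ ^ 2 * (‖x‖⁻¹ ^ 2 * ‖(⟪A x, x⟫_ℂ)‖) ≤ ‖x‖ ^ 2 * nrad A := by
        gcongr
    _ = nrad A * ‖x‖ ^ 2 := by ring

lemma abs_comb_le (a b : ℝ) : |a + b| ≤ Real.sqrt 2 * Real.sqrt (a ^ 2 + b ^ 2) := by
  rw [← Real.sqrt_sq_eq_abs, ← Real.sqrt_mul (by norm_num : (0:ℝ) ≤ 2)]
  exact Real.sqrt_le_sqrt (by nlinarith [sq_nonneg (a - b)])

lemma norm_complex_eq (z : ℂ) : ‖z‖ = Real.sqrt (z.re ^ 2 + z.im ^ 2) := by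
  rw [Complex.norm_def, Complex.normSq_apply]
  ring_nf

lemma inner_reP_eq (A : H →L[ℂ] H) (x : H) :
    ⟪reP A x, x⟫_ℂ = (((⟪A x, x⟫_ℂ).re : ℝ) : ℂ) := by
  rw [reP]
  simp only [smul_apply, add_apply, inner_smul_left, inner_add_left, adjoint_inner_left,
    ← inner_conj_symm x (A x)]
  rw [Complex.add_conj]
  simp [Complex.ext_iff]

lemma inner_imP_eq (A : H →L[ℂ] H) (x : H) :
    ⟪imP A x, x⟫_ℂ = ((-(⟪A x, x⟫_ℂ).im : ℝ) : ℂ) := by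
  rw [imP]
  simp only [smul_apply, sub_apply, inner_smul_left, inner_sub_left, adjoint_inner_left,
    ← inner_conj_symm x (A x)]
  rw [Complex.sub_conj]
  simp [Complex.ext_iff, map_inv₀, map_mul, Complex.conj_I]

lemma normP_le (A : H →L[ℂ] H) : ‖reP A + imP A‖ ≤ Real.sqrt 2 * nrad A := by
  have hadj : adjoint (reP A + imP A) = reP A + imP A := by
    rw [map_add, adjoint_reP, adjoint_imP]
  refine norm_le_of_sym _ hadj _ (mul_nonneg (Real.sqrt_nonneg 2) (nrad_nonneg A)) fun x => ?_
  set z := ⟪A x, x⟫_ℂ with hz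
  have h1 : ⟪(reP A + imP A) x, x⟫_ℂ = ((z.re - z.im : ℝ) : ℂ) := by
    simp only [add_apply, inner_add_left, inner_reP_eq, inner_imP_eq, ← hz]
    push_cast
    ring
  rw [h1, Complex.norm_real]
  calc |z.re - z.im| ≤ Real.sqrt 2 * Real.sqrt (z.re ^ 2 + (-z.im) ^ 2) := by
        have := abs_comb_le z.re (-z.im); rwa [← sub_eq_add_neg] at this
    _ = Real.sqrt 2 * ‖z‖ := by rw [norm_complex_eq]; ring_nf
    _ ≤ Real.sqrt 2 * (nrad A * ‖x‖ ^ 2) := by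
        gcongr
        exact inner_le_nrad' A x
    _ = Real.sqrt 2 * nrad A * ‖x‖ ^ 2 := by ring

lemma normQ_le (A : H →L[ℂ] H) : ‖reP A - imP A‖ ≤ Real.sqrt 2 * nrad A := by
  have hadj : adjoint (reP A - imP A) = reP A - imP A := by
    rw [map_sub, adjoint_reP, adjoint_imP]
  refine norm_le_of_sym _ hadj _ (mul_nonneg (Real.sqrt_nonneg 2) (nrad_nonneg A)) fun x => ?_
  set z := ⟪A x, x⟫_ℂ with hz
  have h1 : ⟪(reP A - imP A) x, x⟫_ℂ = ((z.re + z.im : ℝ) : ℂ) := by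
    simp only [sub_apply, inner_sub_left, inner_reP_eq, inner_imP_eq, ← hz]
    push_cast
    ring
  rw [h1, Complex.norm_real]
  calc |z.re + z.im| ≤ Real.sqrt 2 * Real.sqrt (z.re ^ 2 + z.im ^ 2) := abs_comb_le _ _
    _ = Real.sqrt 2 * ‖z‖ := by rw [norm_complex_eq]
    _ ≤ Real.sqrt 2 * (nrad A * ‖x‖ ^ 2) := by
        gcongr
        exact inner_le_nrad' A x
    _ = Real.sqrt 2 * nrad A * ‖x‖ ^ 2 := by ring

theorem stmt17 (A B : H →L[ℂ] H) (hA : A ≠ 0) (hB : B ≠ 0)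
    (h : nrad (A * B + B * A) = 2 * Real.sqrt 2 * ‖B‖ * nrad A
      ∨ nrad (A * B - B * A) = 2 * Real.sqrt 2 * ‖B‖ * nrad A) :
    ‖reP A + imP A‖ = ‖reP A - imP A‖ := by
  -- nonempty unit sphere
  have hne : Nonempty {x : H // ‖x‖ = 1} := by
    obtain ⟨v, hv⟩ : ∃ v, A v ≠ 0 := by
      by_contra hc
      push_neg at hc
      exact hA (ContinuousLinearMap.ext fun v => by simp [hc v])
    have hv0 : v ≠ 0 := fun h0 => hv (by simp [h0])
    have hvn : (0:ℝ) < ‖v‖ := norm_pos_iff.mpr hv0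
    exact ⟨⟨(‖v‖⁻¹ : ℂ) • v, by
      rw [norm_smul]
      simp [abs_of_pos (by positivity : (0:ℝ) < ‖v‖⁻¹), inv_mul_cancel₀ hvn.ne']⟩⟩
  set p := ‖reP A + imP A‖ with hp
  set q := ‖reP A - imP A‖ with hq
  set w := nrad A with hw
  have hwnn : 0 ≤ w := nrad_nonneg A
  have hple : p ≤ Real.sqrt 2 * w := normP_le A
  have hqle : q ≤ Real.sqrt 2 * w := normQ_le A
  have hBpos : (0:ℝ) < ‖B‖ := norm_pos_iff.mpr hB
  -- pointwise core bound
  have hcore : ∀ x : H, ‖x‖ = 1 →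
      ‖⟪A (B x), x⟫_ℂ‖ + ‖⟪B (A x), x⟫_ℂ‖ ≤ ‖B‖ * Real.sqrt (2 * (p ^ 2 + q ^ 2)) := by
    intro x hx
    have h1 : ‖⟪A (B x), x⟫_ℂ‖ ≤ ‖B‖ * ‖adjoint A x‖ := by
      rw [← adjoint_inner_right]
      calc ‖⟪B x, adjoint A x⟫_ℂ‖ ≤ ‖B x‖ * ‖adjoint A x‖ := norm_inner_le_norm _ _
        _ ≤ (‖B‖ * ‖x‖) * ‖adjoint A x‖ := by gcongr; exact B.le_opNorm x
        _ = ‖B‖ * ‖adjoint A x‖ := by rw [hx]; ring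
    have h2 : ‖⟪B (A x), x⟫_ℂ‖ ≤ ‖B‖ * ‖A x‖ := by
      calc ‖⟪B (A x), x⟫_ℂ‖ ≤ ‖B (A x)‖ * ‖x‖ := norm_inner_le_norm _ _
        _ ≤ (‖B‖ * ‖A x‖) * ‖x‖ := by gcongr; exact B.le_opNorm _
        _ = ‖B‖ * ‖A x‖ := by rw [hx]; ring
    have hPx : ‖(reP A + imP A) x‖ ≤ p := by
      simpa [hx] using (reP A + imP A).le_opNorm x
    have hQx : ‖(reP A - imP A) x‖ ≤ q := by
      simpa [hx] using (reP A - imP A).le_opNorm x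
    have hsq := norms_sq_eq A x
    have hsum2 : (‖A x‖ + ‖adjoint A x‖) ^ 2 ≤ 2 * (p ^ 2 + q ^ 2) := by
      nlinarith [sq_nonneg (‖A x‖ - ‖adjoint A x‖), norm_nonneg ((reP A + imP A) x),
        norm_nonneg ((reP A - imP A) x), norm_nonneg (A x), norm_nonneg (adjoint A x)]
    have h3 : ‖A x‖ + ‖adjoint A x‖ ≤ Real.sqrt (2 * (p ^ 2 + q ^ 2)) := by
      calc ‖A x‖ + ‖adjoint A x‖
          = Real.sqrt ((‖A x‖ + ‖adjoint A x‖) ^ 2) := (Real.sqrt_sq (by positivity)).symm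
        _ ≤ Real.sqrt (2 * (p ^ 2 + q ^ 2)) := Real.sqrt_le_sqrt hsum2
    calc ‖⟪A (B x), x⟫_ℂ‖ + ‖⟪B (A x), x⟫_ℂ‖ ≤ ‖B‖ * (‖adjoint A x‖ + ‖A x‖) := by
          rw [mul_add]; exact add_le_add h1 h2
      _ ≤ ‖B‖ * Real.sqrt (2 * (p ^ 2 + q ^ 2)) :=
          mul_le_mul_of_nonneg_left (by linarith) (norm_nonneg B)
  -- the key inequality in both cases
  have hkey : 2 * Real.sqrt 2 * ‖B‖ * w ≤ ‖B‖ * Real.sqrt (2 * (p ^ 2 + q ^ 2)) := by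
    rcases h with h | h
    · rw [← h]
      refine nrad_le _ _ fun x hx => ?_
      calc ‖⟪(A * B + B * A) x, x⟫_ℂ‖ = ‖⟪A (B x), x⟫_ℂ + ⟪B (A x), x⟫_ℂ‖ := by
            simp [ContinuousLinearMap.mul_apply, inner_add_left]
        _ ≤ ‖⟪A (B x), x⟫_ℂ‖ + ‖⟪B (A x), x⟫_ℂ‖ := norm_add_le _ _
        _ ≤ _ := hcore x hx
    · rw [← h]
      refine nrad_le _ _ fun x hx => ?_
      calc ‖⟪(A * B - B * A) x, x⟫_ℂ‖ = ‖⟪A (B x), x⟫_ℂ - ⟪B (A x), x⟫_ℂ‖ := by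
            simp [ContinuousLinearMap.mul_apply, inner_sub_left]
        _ ≤ ‖⟪A (B x), x⟫_ℂ‖ + ‖⟪B (A x), x⟫_ℂ‖ := norm_sub_le _ _
        _ ≤ _ := hcore x hx
  -- divide by ‖B‖ and square
  have hdiv : 2 * Real.sqrt 2 * w ≤ Real.sqrt (2 * (p ^ 2 + q ^ 2)) := by
    have hre : 2 * Real.sqrt 2 * ‖B‖ * w = ‖B‖ * (2 * Real.sqrt 2 * w) := by ring
    rw [hre] at hkey
    exact le_of_mul_le_mul_left hkey hBpos
  have hsqrt2 : Real.sqrt 2 ^ 2 = 2 := Real.sq_sqrt (by norm_num)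
  have hM : Real.sqrt (2 * (p ^ 2 + q ^ 2)) ^ 2 = 2 * (p ^ 2 + q ^ 2) :=
    Real.sq_sqrt (by positivity)
  have h8 : 8 * w ^ 2 ≤ 2 * (p ^ 2 + q ^ 2) := by
    have h8' : (2 * Real.sqrt 2 * w) ^ 2 ≤ Real.sqrt (2 * (p ^ 2 + q ^ 2)) ^ 2 :=
      pow_le_pow_left₀ (by positivity) hdiv 2
    rw [hM] at h8'
    have he : (2 * Real.sqrt 2 * w) ^ 2 = 8 * w ^ 2 := by
      rw [mul_pow, mul_pow, hsqrt2]; ring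
    linarith [he ▸ h8']
  have hp2 : p ^ 2 ≤ 2 * w ^ 2 := by
    have := pow_le_pow_left₀ (norm_nonneg (reP A + imP A)) hple 2
    rw [mul_pow, hsqrt2] at this
    exact this
  have hq2 : q ^ 2 ≤ 2 * w ^ 2 := by
    have := pow_le_pow_left₀ (norm_nonneg (reP A - imP A)) hqle 2
    rw [mul_pow, hsqrt2] at this
    exact this
  have hpq : p ^ 2 = q ^ 2 := by linarith
  have : Real.sqrt (p ^ 2) = Real.sqrt (q ^ 2) := by rw [hpq]
  rwa [Real.sqrt_sq (norm_nonneg _), Real.sqrt_sq (norm_nonneg _)] at this
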